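/- For all integers r ≥ 3, 1 ≤ ℓ ≤ r, and k ≥ r+1-ℓ, there exists a complete r-uniform (r,ℓ)-partite hypergraph with a spanning k-coloring of its edges such that the vertex set cannot be covered by ⌊(k-r+ℓ-1)/ℓ⌋ monochromatic components; i.e., cov(r,ℓ,k) ≥ 1 + ⌊(k-r+ℓ-1)/ℓ⌋. -/

import Mathlib

open Classical

variable {V : Type*}

/-- `e` is an edge of the complete `r`-uniform `r`-partite hypergraph with
partition `part`: it meets every class in exactly one vertex. -/
def IsPartiteEdge {r : ℕ} (part : V → Fin r) (e : Finset V) : Prop :=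
  ∀ i : Fin r, (e.filter fun v => part v = i).card = 1

/-- `e` is an edge of the complete `r`-uniform `(r,ℓ)`-partite hypergraph:
an `r`-set meeting every class in at most `ℓ` vertices. -/
def IsRLEdge {r : ℕ} (part : V → Fin r) (ℓ : ℕ) (e : Finset V) : Prop :=
  e.card = r ∧ ∀ i : Fin r, (e.filter fun v => part v = i).card ≤ ℓ

/-- An edge is friendly if it meets at most one class in exactly `ℓ` vertices. -/
def Friendly {r : ℕ} (part : V → Fin r) (ℓ : ℕ) (e : Finset V) : Prop :=
  (Finset.univ.filter fun i : Fin r => (e.filter fun v => part v = i).card = ℓ).card ≤ 1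

/-- `u` and `v` lie in the same monochromatic component of color `c` of the
hypergraph with edge predicate `E` and edge coloring `χ`. -/
def MonoConn {k : ℕ} (E : Finset V → Prop) (χ : Finset V → Fin k) (c : Fin k)
    (u v : V) : Prop :=
  Relation.ReflTransGen (fun a b => ∃ e : Finset V, E e ∧ χ e = c ∧ a ∈ e ∧ b ∈ e) u v

/-- The coloring `χ` is spanning: every vertex is incident with an edge of every color. -/
def Spanning {k : ℕ} (E : Finset V → Prop) (χ : Finset V → Fin k) : Prop :=
  ∀ v : V, ∀ c : Fin k, ∃ e : Finset V, E e ∧ χ e = c ∧ v ∈ e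

/-- The vertex set can be covered by at most `m` monochromatic components. -/
def CoversBy {k : ℕ} (E : Finset V → Prop) (χ : Finset V → Fin k) (m : ℕ) : Prop :=
  ∃ f : Fin m → Fin k × V, ∀ v : V, ∃ i : Fin m, MonoConn E χ (f i).1 (f i).2 v

/-- Hamming distance of the component vectors of two vertices: the number of
colors `c` for which they lie in different monochromatic components of color `c`. -/
noncomputable def HamDist {k : ℕ} (E : Finset V → Prop) (χ : Finset V → Fin k)
    (v w : V) : ℕ :=
  (Finset.univ.filter fun c : Fin k => ¬ MonoConn E χ c v w).card


namespace S13

variable {r k m : ℕ}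

abbrev Vtx (r k m : ℕ) : Type := Fin r × (Fin k → Fin (m+1)) × Fin k

noncomputable def supp {k m : ℕ} (x : Fin k → Fin (m+1)) : Finset (Fin k) :=
  Finset.univ.filter fun c => x c ≠ 0

def cap {r : ℕ} (m : ℕ) (i : Fin r) : ℕ := if (i : ℕ) = 0 then m else 1

noncomputable def X {r k m : ℕ} (v : Vtx r k m) : Fin k → Fin (m+1) :=
  if (supp v.2.1).card ≤ cap m v.1 then v.2.1 else fun _ => 0

noncomputable def constSet {r k m : ℕ} (e : Finset (Vtx r k m)) : Finset (Fin k) :=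
  Finset.univ.filter fun c => ∀ u ∈ e, ∀ w ∈ e, X u c = X w c

noncomputable def tagsum {r k m : ℕ} (e : Finset (Vtx r k m)) : ℕ :=
  ∑ v ∈ e, (v.2.2 : ℕ)

noncomputable def pick {k : ℕ} (hk : 0 < k) (s : Finset (Fin k)) (n : ℕ) : Fin k :=
  if h : s.Nonempty then
    (s.sort (· ≤ ·)).get ⟨n % s.card, by
      rw [Finset.length_sort]; exact Nat.mod_lt _ (Finset.card_pos.mpr h)⟩
  else ⟨0, hk⟩

lemma pick_mem {k : ℕ} (hk : 0 < k) (s : Finset (Fin k)) (n : ℕ) (h : s.Nonempty) :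
    pick hk s n ∈ s := by
  rw [pick, dif_pos h]
  exact (Finset.mem_sort _).1 (List.get_mem _ _)

lemma pick_eq {k : ℕ} (hk : 0 < k) (s : Finset (Fin k)) (n : ℕ) (c : Fin k) (hc : c ∈ s)
    (idx : Fin ((s.sort (· ≤ ·)).length)) (hidx : (s.sort (· ≤ ·)).get idx = c)
    (hn : n % s.card = idx.val) : pick hk s n = c := by
  rw [pick, dif_pos ⟨c, hc⟩]
  exact (congrArg _ (Fin.ext hn)).trans hidx

lemma mod_key (L t i : ℕ) (hL : 0 < L) (hi : i < L) :
    (t + (i + L - t % L) % L) % L = i := by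
  obtain ⟨q, u, hu, rfl⟩ : ∃ q u, u < L ∧ t = L * q + u :=
    ⟨t / L, t % L, Nat.mod_lt _ hL, ((Nat.div_add_mod t L).symm)⟩
  have h1 : (L * q + u) % L = u := by
    rw [Nat.mul_add_mod]; exact Nat.mod_eq_of_lt hu
  rw [h1]
  rcases le_or_gt u i with h | h
  · have h2 : i + L - u = (i - u) + L := by omega
    rw [h2, Nat.add_mod_right, Nat.mod_eq_of_lt (by omega : i - u < L)]
    have h3 : ∀ a : ℕ, a + u + (i - u) = a + i := fun a => by omega
    rw [h3, Nat.mul_add_mod, Nat.mod_eq_of_lt hi]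
  · rw [Nat.mod_eq_of_lt (by omega : i + L - u < L)]
    have h3 : ∀ a : ℕ, a + u + (i + L - u) = a + (i + L) := fun a => by omega
    rw [h3, Nat.mul_add_mod, Nat.add_mod_right, Nat.mod_eq_of_lt hi]


lemma supp_X_card_le (v : Vtx r k m) : (supp (X v)).card ≤ cap m v.1 := by
  rw [X]; split
  · assumption
  · simp [supp]

lemma const_nonempty (ℓ : ℕ) (hℓ1 : 1 ≤ ℓ) (hℓr : ℓ ≤ r) (hk2 : ℓ * m + (r - ℓ) < k)
    (e : Finset (Vtx r k m)) (he : IsRLEdge Prod.fst ℓ e) : (constSet e).Nonempty := by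
  have hr0 : 0 < r := by omega
  have hkpos : 0 < k := by omega
  set S : Finset (Fin k) := e.biUnion (fun v => supp (X v)) with hS
  have hcard : S.card < k := by
    rcases Nat.eq_zero_or_pos m with hm0 | hm1
    · have hSe : S = ∅ := by
        apply Finset.eq_empty_of_forall_notMem
        intro c hc
        rw [hS, Finset.mem_biUnion] at hc
        obtain ⟨v, _, hv⟩ := hc
        rw [supp, Finset.mem_filter] at hv
        apply hv.2
        subst hm0
        exact Fin.fin_one_eq_zero _
      rw [hSe]; simpa using hkpos
    · have h1 : S.card ≤ ∑ v ∈ e, (supp (X v)).card := Finset.card_biUnion_le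
      have h3 : ∑ v ∈ e, (supp (X v)).card ≤ ∑ v ∈ e, cap m v.1 :=
        Finset.sum_le_sum fun v _ => supp_X_card_le v
      have h4 : ∑ v ∈ e.filter (fun v => v.1 = (⟨0, hr0⟩ : Fin r)), cap m v.1
          + ∑ v ∈ e.filter (fun v => ¬ v.1 = (⟨0, hr0⟩ : Fin r)), cap m v.1
          = ∑ v ∈ e, cap m v.1 := Finset.sum_filter_add_sum_filter_not e _ _
      have h5 : ∑ v ∈ e.filter (fun v => v.1 = (⟨0, hr0⟩ : Fin r)), cap m v.1
          = (e.filter (fun v => v.1 = (⟨0, hr0⟩ : Fin r))).card * m := by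
        rw [Finset.sum_congr rfl (g := fun _ => m) ?_, Finset.sum_const, smul_eq_mul]
        intro v hv
        rw [Finset.mem_filter] at hv
        rw [cap, if_pos (by rw [hv.2])]
      have h6 : ∑ v ∈ e.filter (fun v => ¬ v.1 = (⟨0, hr0⟩ : Fin r)), cap m v.1
          = (e.filter (fun v => ¬ v.1 = (⟨0, hr0⟩ : Fin r))).card := by
        rw [Finset.sum_congr rfl (g := fun _ => 1) ?_, Finset.sum_const, smul_eq_mul,
          mul_one]
        intro v hv
        rw [Finset.mem_filter] at hv
        rw [cap, if_neg (fun h0 => hv.2 (Fin.ext h0))]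
      set t0 := (e.filter (fun v => v.1 = (⟨0, hr0⟩ : Fin r))).card with ht0
      set t1 := (e.filter (fun v => ¬ v.1 = (⟨0, hr0⟩ : Fin r))).card with ht1
      have ht01 : t0 + t1 = r := by
        rw [ht0, ht1, Finset.card_filter_add_card_filter_not, he.1]
      have ht0ℓ : t0 ≤ ℓ := by
        have h := he.2 ⟨0, hr0⟩
        have heq : (e.filter fun v => Prod.fst v = (⟨0, hr0⟩ : Fin r))
            = e.filter (fun v => v.1 = (⟨0, hr0⟩ : Fin r)) := by
          ext u; simp only [Finset.mem_filter]
        rw [heq] at h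
        exact h
      have hmain : S.card ≤ t0 * m + t1 := by
        calc S.card ≤ _ := h1
          _ ≤ _ := h3
          _ = t0 * m + t1 := by rw [← h4, h5, h6]
      obtain ⟨d, hd⟩ : ∃ d, ℓ = t0 + d := ⟨ℓ - t0, by omega⟩
      have h7 : d ≤ d * m := Nat.le_mul_of_pos_right d hm1
      have hgen : ∀ a : ℕ, a + t1 = a + d + (r - ℓ) := fun a => by omega
      have h9 : t0 * m + t1 ≤ ℓ * m + (r - ℓ) := by
        calc t0 * m + t1 = t0 * m + d + (r - ℓ) := hgen _
          _ ≤ t0 * m + d * m + (r - ℓ) := by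
              exact Nat.add_le_add_right (Nat.add_le_add_left h7 _) _
          _ = (t0 + d) * m + (r - ℓ) := by rw [Nat.add_mul]
          _ = ℓ * m + (r - ℓ) := by rw [← hd]
      exact lt_of_le_of_lt (le_trans hmain h9) hk2
  have hex : ∃ c : Fin k, c ∉ S := by
    by_contra hcon
    push_neg at hcon
    have hU : S = Finset.univ := Finset.eq_univ_iff_forall.2 hcon
    rw [hU, Finset.card_univ, Fintype.card_fin] at hcard
    exact lt_irrefl _ hcard
  obtain ⟨c, hc⟩ := hex
  refine ⟨c, ?_⟩
  rw [constSet, Finset.mem_filter]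
  refine ⟨Finset.mem_univ _, ?_⟩
  have hz : ∀ u ∈ e, X u c = 0 := by
    intro u hu
    by_contra h0
    exact hc (Finset.mem_biUnion.2 ⟨u, hu, by
      rw [supp, Finset.mem_filter]; exact ⟨Finset.mem_univ _, h0⟩⟩)
  intro u hu w hw
  rw [hz u hu, hz w hw]

lemma mono_eq {ℓ : ℕ} (hkpos : 0 < k) (hℓ1 : 1 ≤ ℓ) (hℓr : ℓ ≤ r)
    (hk2 : ℓ * m + (r - ℓ) < k) (c : Fin k) (u w : Vtx r k m)
    (h : MonoConn (IsRLEdge Prod.fst ℓ) (fun e => pick hkpos (constSet e) (tagsum e)) c u w) :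
    X u c = X w c := by
  induction h with
  | refl => rfl
  | tail _ hbc ih =>
    obtain ⟨e, he, hchi, ha, hb⟩ := hbc
    have hne : (constSet e).Nonempty := const_nonempty ℓ hℓ1 hℓr hk2 e he
    have hmem : pick hkpos (constSet e) (tagsum e) ∈ constSet e := pick_mem _ _ _ hne
    have hchi' : pick hkpos (constSet e) (tagsum e) = c := hchi
    rw [hchi', constSet, Finset.mem_filter] at hmem
    exact ih.trans (hmem.2 _ ha _ hb)

lemma spanning_main (ℓ : ℕ) (hr : 3 ≤ r) (hkpos : 0 < k) (hℓ1 : 1 ≤ ℓ) :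
    Spanning (IsRLEdge (Prod.fst) ℓ)
      (fun e : Finset (Vtx r k m) => pick hkpos (constSet e) (tagsum e)) := by
  intro v c
  have hr0 : 0 < r := by omega
  have hr1 : 1 < r := by omega
  set a := X v c with ha
  set δ : Fin k → Fin (m+1) := fun c' => if c' = c then a else 0 with hδ
  set j0 : Fin r := if v.1 = ⟨0, hr0⟩ then ⟨1, hr1⟩ else ⟨0, hr0⟩ with hj0
  have hj0i : j0 ≠ v.1 := by
    rw [hj0]; split
    · rename_i h; rw [h]; intro hE; exact absurd (congrArg Fin.val hE) (by simp)
    · rename_i h; exact fun hE => h hE.symm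
  set F : Fin k → Fin r → Vtx r k m := fun τ j =>
    if j = v.1 then v else (j, δ, if j = j0 then τ else ⟨0, hkpos⟩) with hF
  set Y : Fin r → Fin k → Fin (m+1) := fun j => if j = v.1 then X v else δ with hY
  have hF1 : ∀ τ j, (F τ j).1 = j := by
    intro τ j; simp only [hF]; split
    · rename_i h; rw [h]
    · rfl
  have hFinj : ∀ τ, Function.Injective (F τ) := by
    intro τ x y hxy
    have h2 := congrArg Prod.fst hxy
    rwa [hF1, hF1] at h2
  set E : Fin k → Finset (Vtx r k m) := fun τ => Finset.image (F τ) Finset.univ with hE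
  have hmemE : ∀ τ u, u ∈ E τ ↔ ∃ j, F τ j = u := by
    intro τ u; simp only [hE, Finset.mem_image]
    constructor
    · rintro ⟨j, _, hj⟩; exact ⟨j, hj⟩
    · rintro ⟨j, hj⟩; exact ⟨j, Finset.mem_univ _, hj⟩
  have hvE : ∀ τ, v ∈ E τ := by
    intro τ
    refine (hmemE τ v).2 ⟨v.1, ?_⟩
    simp [hF]
  have hXF' : ∀ τ j, X (F τ j) = Y j := by
    intro τ j
    by_cases hj : j = v.1
    · simp only [hF, hY]; rw [if_pos hj, if_pos hj]
    · simp only [hF, hY]; rw [if_neg hj, if_neg hj]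
      rw [X]
      have hcap : (supp δ).card ≤ cap m (j, δ, if j = j0 then τ else ⟨0, hkpos⟩).1 := by
        rcases Nat.eq_zero_or_pos m with hm0 | hm1
        · have hz : ∀ c', δ c' = 0 := by
            intro c'; simp only [hδ]; subst hm0
            split
            · exact Fin.fin_one_eq_zero _
            · rfl
          have hsupp : supp δ = ∅ := by
            apply Finset.eq_empty_of_forall_notMem
            intro c' hc'
            rw [supp, Finset.mem_filter] at hc'
            exact hc'.2 (hz c')
          rw [hsupp]; simp
        · have hsub : supp δ ⊆ {c} := by
            intro c' hc'
            rw [supp, Finset.mem_filter] at hc'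
            rw [Finset.mem_singleton]
            by_contra hne
            exact hc'.2 (by simp only [hδ]; rw [if_neg hne])
          have hone : (supp δ).card ≤ 1 := by
            refine le_trans (Finset.card_le_card hsub) ?_
            simp
          refine le_trans hone ?_
          rw [cap]; dsimp only; split
          · exact hm1
          · exact le_refl 1
      rw [if_pos hcap]
  have hsingle : ∀ τ (b : Fin r) u, u ∈ E τ → u.1 = b → u = F τ b := by
    intro τ b u hu hub
    obtain ⟨j, rfl⟩ := (hmemE τ u).1 hu
    rw [hF1] at hub; rw [hub]
  have hedge : ∀ τ, IsRLEdge (Prod.fst) ℓ (E τ) := by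
    intro τ
    constructor
    · simp only [hE]
      rw [Finset.card_image_of_injective _ (hFinj τ), Finset.card_univ, Fintype.card_fin]
    · intro b
      refine le_trans (Finset.card_le_one.2 ?_) hℓ1
      intro x hx y hy
      rw [Finset.mem_filter] at hx hy
      rw [hsingle τ b x hx.1 hx.2, hsingle τ b y hy.1 hy.2]
  have hcmem : ∀ τ, c ∈ constSet (E τ) := by
    intro τ
    rw [constSet, Finset.mem_filter]
    refine ⟨Finset.mem_univ _, ?_⟩
    have hval : ∀ u ∈ E τ, X u c = a := by
      intro u hu
      obtain ⟨j, rfl⟩ := (hmemE τ u).1 hu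
      rw [congrFun (hXF' τ j) c]
      by_cases hj : j = v.1
      · simp [hY, hj, ha]
      · simp only [hY]
        rw [if_neg hj]
        simp [hδ]
    intro u hu w hw
    rw [hval u hu, hval w hw]
  have hCS : ∀ τ, constSet (E τ) = constSet (E ⟨0, hkpos⟩) := by
    have key : ∀ τ, constSet (E τ)
        = Finset.univ.filter (fun c' => ∀ j j' : Fin r, Y j c' = Y j' c') := by
      intro τ
      rw [constSet]
      apply Finset.filter_congr
      intro c' _
      constructor
      · intro H j j'
        rw [← congrFun (hXF' τ j) c', ← congrFun (hXF' τ j') c']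
        exact H _ ((hmemE τ _).2 ⟨j, rfl⟩) _ ((hmemE τ _).2 ⟨j', rfl⟩)
      · intro H u hu w hw
        obtain ⟨j, rfl⟩ := (hmemE τ u).1 hu
        obtain ⟨j', rfl⟩ := (hmemE τ w).1 hw
        rw [congrFun (hXF' τ j) c', congrFun (hXF' τ j') c']
        exact H j j'
    intro τ; rw [key τ, key _]
  have htag : ∀ τ, tagsum (E τ) = (v.2.2 : ℕ) + (τ : ℕ) := by
    intro τ
    rw [tagsum]
    simp only [hE]
    rw [Finset.sum_image (fun x _ y _ h => hFinj τ h)]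
    have hpt : ∀ j : Fin r, ((F τ j).2.2 : ℕ) =
        (if j = v.1 then (v.2.2 : ℕ) else 0) + (if j = j0 then (τ : ℕ) else 0) := by
      intro j
      simp only [hF]
      by_cases h1 : j = v.1
      · have hjj0 : ¬ j = j0 := fun hh => hj0i (hh ▸ h1)
        simp [h1, hjj0]
        intro hvj0
        exact absurd hvj0.symm hj0i
      · by_cases h2 : j = j0
        · simp only [h2, if_neg h1]
          rw [if_neg hj0i]
          simp [if_neg hj0i]
        · simp [h1, h2]
    rw [Finset.sum_congr rfl (fun j _ => hpt j), Finset.sum_add_distrib]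
    rw [Finset.sum_ite_eq' Finset.univ v.1 (fun _ => ((v.2.2 : ℕ))),
      Finset.sum_ite_eq' Finset.univ j0 (fun _ => ((τ : ℕ)))]
    rw [if_pos (Finset.mem_univ _), if_pos (Finset.mem_univ _)]
  set CS := constSet (E ⟨0, hkpos⟩) with hCSdef
  have hnecs : CS.Nonempty := ⟨c, hcmem _⟩
  have hLpos : 0 < CS.card := Finset.card_pos.2 hnecs
  have hLk : CS.card ≤ k := by
    calc CS.card ≤ (Finset.univ : Finset (Fin k)).card := Finset.card_le_univ _
      _ = k := by rw [Finset.card_univ, Fintype.card_fin]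
  have hcl : c ∈ CS.sort (· ≤ ·) := (Finset.mem_sort _).2 (hcmem _)
  obtain ⟨idx, hidx⟩ := List.mem_iff_get.1 hcl
  have hidxL : (idx : ℕ) < CS.card := by
    have h2 : (idx : ℕ) < (CS.sort (· ≤ ·)).length := idx.2
    have h3 : (CS.sort (· ≤ ·)).length = CS.card := Finset.length_sort _
    omega
  set w0 : ℕ := ((idx : ℕ) + CS.card - (v.2.2 : ℕ) % CS.card) % CS.card with hw0
  have hw0L : w0 < CS.card := Nat.mod_lt _ hLpos
  set τ : Fin k := ⟨w0, lt_of_lt_of_le hw0L hLk⟩ with hτ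
  refine ⟨E τ, hedge τ, ?_, hvE τ⟩
  show pick hkpos (constSet (E τ)) (tagsum (E τ)) = c
  rw [hCS τ, htag τ]
  refine pick_eq hkpos CS _ c (hcmem _) idx hidx ?_
  show ((v.2.2 : ℕ) + w0) % CS.card = idx
  rw [hw0]
  exact mod_key CS.card (v.2.2 : ℕ) idx hLpos hidxL

lemma not_covers (ℓ : ℕ) (hkpos : 0 < k) (hr0 : 0 < r) (hℓ1 : 1 ≤ ℓ) (hℓr : ℓ ≤ r)
    (hk2 : ℓ * m + (r - ℓ) < k) :
    ¬ CoversBy (IsRLEdge (Prod.fst) ℓ)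
      (fun e : Finset (Vtx r k m) => pick hkpos (constSet e) (tagsum e)) m := by
  rintro ⟨f, hf⟩
  set A : Fin k → Finset (Fin (m+1)) := fun c =>
    ((Finset.univ : Finset (Fin m)).filter fun i => (f i).1 = c).image
      (fun i => X (f i).2 c) with hA
  have hAcard : ∀ c, (A c).card ≤ m := by
    intro c
    refine le_trans Finset.card_image_le (le_trans (Finset.card_filter_le _ _) ?_)
    simp
  have hb : ∀ c : Fin k, ∃ b : Fin (m+1), b ∉ A c := by
    intro c
    by_contra hcon
    push_neg at hcon
    have hU : A c = Finset.univ := Finset.eq_univ_iff_forall.2 hcon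
    have hc2 := hAcard c
    rw [hU, Finset.card_univ, Fintype.card_fin] at hc2
    omega
  choose bfun hbfun using hb
  set g : Fin k → Fin (m+1) := fun c =>
    if ∃ i : Fin m, (f i).1 = c ∧ X (f i).2 c = 0 then bfun c else 0 with hg
  have hsuppg : (supp g).card ≤ m := by
    have hsub : supp g ⊆ (Finset.univ : Finset (Fin m)).image (fun i => (f i).1) := by
      intro c hc
      rw [supp, Finset.mem_filter] at hc
      by_cases H : ∃ i : Fin m, (f i).1 = c ∧ X (f i).2 c = 0
      · obtain ⟨i, hi1, _⟩ := H
        exact Finset.mem_image.2 ⟨i, Finset.mem_univ _, hi1⟩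
      · exact absurd (by simp only [hg]; rw [if_neg H]) hc.2
    refine le_trans (Finset.card_le_card hsub) (le_trans Finset.card_image_le ?_)
    simp
  have hcapv : cap m (⟨0, hr0⟩ : Fin r) = m := by rw [cap]; simp
  have hX0 : X ((⟨0, hr0⟩, g, ⟨0, hkpos⟩) : Vtx r k m) = g := by
    rw [X]
    dsimp only
    rw [hcapv, if_pos hsuppg]
  obtain ⟨i0, hi0⟩ := hf (⟨0, hr0⟩, g, ⟨0, hkpos⟩)
  set c := (f i0).1 with hc
  have heq : X (f i0).2 c = g c := by
    have h2 := mono_eq hkpos hℓ1 hℓr hk2 c (f i0).2 _ hi0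
    rw [hX0] at h2
    exact h2
  by_cases H : ∃ i : Fin m, (f i).1 = c ∧ X (f i).2 c = 0
  · have hgc : g c = bfun c := by simp only [hg]; rw [if_pos H]
    have hmem : X (f i0).2 c ∈ A c :=
      Finset.mem_image.2 ⟨i0, Finset.mem_filter.2 ⟨Finset.mem_univ _, rfl⟩, rfl⟩
    rw [heq, hgc] at hmem
    exact hbfun c hmem
  · have hgc : g c = 0 := by simp only [hg]; rw [if_neg H]
    exact H ⟨i0, rfl, by rw [heq, hgc]⟩

end S13


theorem stmt_13 (r ℓ k : ℕ) (hr : 3 ≤ r) (hℓ1 : 1 ≤ ℓ) (hℓr : ℓ ≤ r)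
    (hk : r + 1 - ℓ ≤ k) :
    ∃ (V : Type) (_ : Fintype V) (part : V → Fin r) (χ : Finset V → Fin k),
      (∀ i : Fin r, ∃ v, part v = i) ∧ Spanning (IsRLEdge part ℓ) χ ∧
      ¬ CoversBy (IsRLEdge part ℓ) χ ((k + ℓ - r - 1) / ℓ) := by
  set m := (k + ℓ - r - 1) / ℓ with hmdef
  have h1 : m * ℓ ≤ k + ℓ - r - 1 := Nat.div_mul_le_self _ _
  obtain ⟨P, hP⟩ : ∃ P, P = ℓ * m := ⟨_, rfl⟩
  have h1' : P ≤ k + ℓ - r - 1 := by rw [hP, Nat.mul_comm]; exact h1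
  have hk2 : ℓ * m + (r - ℓ) < k := by rw [← hP]; omega
  have hkpos : 0 < k := by omega
  have hr0 : 0 < r := by omega
  refine ⟨S13.Vtx r k m, inferInstance, Prod.fst,
    (fun e => S13.pick hkpos (S13.constSet e) (S13.tagsum e)), ?_, ?_, ?_⟩
  · intro i
    exact ⟨(i, fun _ => 0, ⟨0, hkpos⟩), rfl⟩
  · exact S13.spanning_main ℓ hr hkpos hℓ1
  · exact S13.not_covers ℓ hkpos hr0 hℓ1 hℓr hk2
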